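/- (Lower estimate) For any probability distribution ρ on the spanning trees of G and non-negative weights θ and potentials, L_ρ(θ) := Σ_{T} ρ^T Φ(Π^T(θ)) ≤ Φ(θ), where Π^T(θ) zeroes out the weights of edges not in T. -/
import Mathlib


open scoped Classical

/-- The log-partition function of a pairwise graphical model on the graph `G`, with
edge weights `θ` and edge potentials `ψ` (a potential `ψ e` evaluates a configuration
`x : V → X`; pairwise structure is imposed by a locality hypothesis in theorems). -/
noncomputable def logPartitionFn {V X : Type*} [Fintype V] [DecidableEq V] [Fintype X]
    (G : SimpleGraph V) [DecidableRel G.Adj]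
    (ψ : Sym2 V → (V → X) → ℝ) (θ : Sym2 V → ℝ) : ℝ :=
  Real.log (∑ x : V → X, Real.exp (∑ e ∈ G.edgeFinset, θ e * ψ e x))

/-- Lower estimate: for any probability distribution `ρ` on the spanning trees of `G`
and non-negative weights and potentials,
`L_ρ(θ) = Σ_T ρ^T Φ(Π^T(θ)) ≤ Φ(θ)`, where `Π^T(θ)` zeroes out weights off `T`. -/
theorem trw_lower_estimate
    {V X : Type*} [Fintype V] [DecidableEq V] [Fintype X] [Nonempty X]
    (G : SimpleGraph V) [DecidableRel G.Adj] (hG : G.Connected)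
    (ψ : Sym2 V → (V → X) → ℝ) (hψ : ∀ e x, 0 ≤ ψ e x)
    (hpair : ∀ e ∈ G.edgeSet, ∀ x y : V → X, (∀ v ∈ e, x v = y v) → ψ e x = ψ e y)
    (θ : Sym2 V → ℝ) (hθ : ∀ e, 0 ≤ θ e)
    {ι : Type*} [Fintype ι] (Tr : ι → SimpleGraph V)
    (hsub : ∀ i, Tr i ≤ G) (htree : ∀ i, (Tr i).IsTree)
    (ρ : ι → ℝ) (hρ0 : ∀ i, 0 ≤ ρ i) (hρ1 : ∑ i, ρ i = 1) :
    ∑ i, ρ i * logPartitionFn G ψ (fun e => if e ∈ (Tr i).edgeSet then θ e else 0)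
      ≤ logPartitionFn G ψ θ := by
  have key : ∀ i, logPartitionFn G ψ (fun e => if e ∈ (Tr i).edgeSet then θ e else 0)
      ≤ logPartitionFn G ψ θ := by
    intro i
    unfold logPartitionFn
    apply Real.log_le_log
    · apply Finset.sum_pos
      · intro x _; exact Real.exp_pos _
      · exact Finset.univ_nonempty
    · apply Finset.sum_le_sum
      intro x _
      apply Real.exp_le_exp.mpr
      apply Finset.sum_le_sum
      intro e _
      by_cases h : e ∈ (Tr i).edgeSet
      · simp [h]
      · simp only [h, if_false, zero_mul]
        exact mul_nonneg (hθ e) (hψ e x)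
  calc ∑ i, ρ i * logPartitionFn G ψ (fun e => if e ∈ (Tr i).edgeSet then θ e else 0)
      ≤ ∑ i, ρ i * logPartitionFn G ψ θ :=
        Finset.sum_le_sum fun i _ => mul_le_mul_of_nonneg_left (key i) (hρ0 i)
    _ = logPartitionFn G ψ θ := by rw [← Finset.sum_mul, hρ1, one_mul]
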